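/- Assume ẏ = A(t)y has (Nμ, ε)-growth and the systems A and B are nonuniformly (μ, ε)-kinematically similar. Then ρ_{NμD}^{3ε}(A) ⊆ ρ_{NμD}(B) and ρ_{NμD}^{3ε}(B) ⊆ ρ_{NμD}(A); equivalently Σ_{NμD}(A) ⊆ Σ_{NμD}^{3ε}(B) and Σ_{NμD}(B) ⊆ Σ_{NμD}^{3ε}(A). -/

import Mathlib

open Real Set Filter

noncomputable section

/-- A growth rate: strictly increasing, positive, `μ 0 = 1`, `μ → ∞` at `+∞`, `μ → 0` at `-∞`. -/
structure GrowthRate (μ : ℝ → ℝ) : Prop where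
  pos : ∀ t, 0 < μ t
  mono : StrictMono μ
  one : μ 0 = 1
  top : Filter.Tendsto μ Filter.atTop Filter.atTop
  bot : Filter.Tendsto μ Filter.atBot (nhds 0)

/-- Nonuniform μ-dichotomy with projector `P` and parameters `(K, α, β, θ, ν)`. -/
def IsNmuD {M : Type*} [NormedRing M] (μ : ℝ → ℝ) (Φ : ℝ → ℝ → M) (P : ℝ → M)
    (K α β θ ν : ℝ) : Prop :=
  1 ≤ K ∧ α < 0 ∧ 0 < β ∧ 0 ≤ θ ∧ 0 ≤ ν ∧ α + θ < 0 ∧ 0 < β - ν ∧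
  (∀ t s : ℝ, s ≤ t →
    ‖Φ t s * P s‖ ≤ K * (μ t / μ s) ^ α * (μ s) ^ (Real.sign s * θ)) ∧
  (∀ t s : ℝ, t ≤ s →
    ‖Φ t s * (1 - P s)‖ ≤ K * (μ t / μ s) ^ β * (μ s) ^ (Real.sign s * ν))

/-- Invariant projector for an evolution operator. -/
def IsInvProj {M : Type*} [Ring M] (Φ : ℝ → ℝ → M) (P : ℝ → M) : Prop :=
  (∀ s, P s * P s = P s) ∧ ∀ t s : ℝ, P t * Φ t s = Φ t s * P s

/-- The γ-shifted evolution operator `Φ_γ(t,s) = (μ t / μ s)^(-γ) • Φ(t,s)`. -/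
def shiftOp {M : Type*} [Ring M] [Algebra ℝ M] (μ : ℝ → ℝ) (Φ : ℝ → ℝ → M)
    (γ : ℝ) : ℝ → ℝ → M :=
  fun t s => ((μ t / μ s) ^ (-γ) : ℝ) • Φ t s

/-- Region of stable constants of the γ-shifted system. -/
def StSet {M : Type*} [NormedRing M] [NormedAlgebra ℝ M] (μ : ℝ → ℝ) (Φ : ℝ → ℝ → M)
    (P : ℝ → M) (γ : ℝ) : Set (ℝ × ℝ) :=
  {p | ∃ K β ν, IsNmuD μ (shiftOp μ Φ γ) P K p.1 β p.2 ν}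

/-- Region of unstable constants of the γ-shifted system. -/
def UnSet {M : Type*} [NormedRing M] [NormedAlgebra ℝ M] (μ : ℝ → ℝ) (Φ : ℝ → ℝ → M)
    (P : ℝ → M) (γ : ℝ) : Set (ℝ × ℝ) :=
  {p | ∃ K α θ, IsNmuD μ (shiftOp μ Φ γ) P K α p.1 θ p.2}

/-- Optimal stable ratio `𝔰𝔱_P^γ = inf {α + θ : (α, θ) ∈ St_P^γ}`. -/
def stRatio {M : Type*} [NormedRing M] [NormedAlgebra ℝ M] (μ : ℝ → ℝ) (Φ : ℝ → ℝ → M)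
    (P : ℝ → M) (γ : ℝ) : ℝ :=
  sInf ((fun p : ℝ × ℝ => p.1 + p.2) '' StSet μ Φ P γ)

/-- Optimal unstable ratio `𝔲𝔫_P^γ = sup {β - ν : (β, ν) ∈ Un_P^γ}`. -/
def unRatio {M : Type*} [NormedRing M] [NormedAlgebra ℝ M] (μ : ℝ → ℝ) (Φ : ℝ → ℝ → M)
    (P : ℝ → M) (γ : ℝ) : ℝ :=
  sSup ((fun p : ℝ × ℝ => p.1 - p.2) '' UnSet μ Φ P γ)

/-- Nonuniform μ-bounded growth with constants `Khat`, `a` and parameter `ep`. -/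
def HasNmuGrowth {M : Type*} [NormedRing M] (μ : ℝ → ℝ) (Φ : ℝ → ℝ → M)
    (Khat a ep : ℝ) : Prop :=
  1 ≤ Khat ∧ 0 ≤ a ∧ ∀ t s : ℝ,
    ‖Φ t s‖ ≤ Khat * (μ t / μ s) ^ (Real.sign (t - s) * a) * μ s ^ (Real.sign s * ep)

/-- The nonuniform μ-dichotomy resolvent set. -/
def NmuResolvent {M : Type*} [NormedRing M] [NormedAlgebra ℝ M] (μ : ℝ → ℝ)
    (Φ : ℝ → ℝ → M) : Set ℝ :=
  {γ | ∃ P K α β θ ν, IsInvProj Φ P ∧ IsNmuD μ (shiftOp μ Φ γ) P K α β θ ν}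

/-- Nonuniform (μ, ε)-kinematic similarity via the Lyapunov pair `S`, `Sinv`. -/
def KinSim {M : Type*} [NormedRing M] (μ : ℝ → ℝ) (Φ Ψ : ℝ → ℝ → M)
    (S Sinv : ℝ → M) (ε Mc : ℝ) : Prop :=
  0 < Mc ∧ (∀ t, S t * Sinv t = 1) ∧ (∀ t, Sinv t * S t = 1) ∧
  (∀ t, ‖S t‖ ≤ Mc * μ t ^ (Real.sign t * ε)) ∧
  (∀ t, ‖Sinv t‖ ≤ Mc * μ t ^ (Real.sign t * ε)) ∧
  (∀ t s : ℝ, Φ t s * S s = S t * Ψ t s)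

/-- The global optimal ratio function. -/
def Gor {M : Type*} [NormedRing M] [NormedAlgebra ℝ M] (μ : ℝ → ℝ)
    (Φ : ℝ → ℝ → M) (γ : ℝ) : ℝ :=
  sSup {x | ∃ P K α β θ ν, IsInvProj Φ P ∧ IsNmuD μ (shiftOp μ Φ γ) P K α β θ ν ∧
    x = min (-(α + θ)) (β - ν)}

/-- The ε-interior of the nonuniform μ-resolvent. -/
def epsResolvent {M : Type*} [NormedRing M] [NormedAlgebra ℝ M] (μ : ℝ → ℝ)
    (Φ : ℝ → ℝ → M) (ε : ℝ) : Set ℝ :=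
  {γ | γ ∈ NmuResolvent μ Φ ∧ ε < Gor μ Φ γ}

section Aux

variable {μ : ℝ → ℝ} {ε : ℝ}

lemma rep_add (hμ : GrowthRate μ) (hε : 0 ≤ ε) (r : ℝ) :
    μ r ^ ((Real.sign r + 1) * ε) = max 1 (μ r ^ (2 * ε)) := by
  rcases lt_trichotomy r 0 with h | h | h
  · rw [Real.sign_of_neg h, show ((-1:ℝ) + 1) * ε = 0 by ring, Real.rpow_zero]
    have hlt : μ r ≤ 1 := by rw [← hμ.one]; exact (hμ.mono h).le
    have h2 : μ r ^ (2 * ε) ≤ 1 := Real.rpow_le_one (hμ.pos r).le hlt (by linarith)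
    rw [max_eq_left h2]
  · subst h; rw [hμ.one, Real.one_rpow, Real.one_rpow, max_self]
  · rw [Real.sign_of_pos h, show ((1:ℝ) + 1) * ε = 2 * ε by ring]
    have h1 : (1:ℝ) ≤ μ r := by rw [← hμ.one]; exact (hμ.mono h).le
    have h2 : (1:ℝ) ≤ μ r ^ (2 * ε) := by
      calc (1:ℝ) = (1:ℝ) ^ (2 * ε) := (Real.one_rpow _).symm
      _ ≤ μ r ^ (2 * ε) := Real.rpow_le_rpow zero_le_one h1 (by linarith)
    rw [max_eq_right h2]

lemma rep_sub (hμ : GrowthRate μ) (hε : 0 ≤ ε) (r : ℝ) :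
    μ r ^ ((Real.sign r - 1) * ε) = max 1 (μ r ^ (-(2 * ε))) := by
  rcases lt_trichotomy r 0 with h | h | h
  · rw [Real.sign_of_neg h, show ((-1:ℝ) - 1) * ε = -(2 * ε) by ring]
    have hlt : μ r ≤ 1 := by rw [← hμ.one]; exact (hμ.mono h).le
    have h2 : (1:ℝ) ≤ μ r ^ (-(2 * ε)) :=
      Real.one_le_rpow_of_pos_of_le_one_of_nonpos (hμ.pos r) hlt (by linarith)
    rw [max_eq_right h2]
  · subst h; rw [hμ.one, Real.one_rpow, Real.one_rpow, max_self]
  · rw [Real.sign_of_pos h, show ((1:ℝ) - 1) * ε = 0 by ring, Real.rpow_zero]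
    have h1 : (1:ℝ) ≤ μ r := by rw [← hμ.one]; exact (hμ.mono h).le
    have h2 : μ r ^ (-(2 * ε)) ≤ 1 :=
      Real.rpow_le_one_of_one_le_of_nonpos h1 (by linarith)
    rw [max_eq_left h2]

lemma aux_mono (hμ : GrowthRate μ) (hε : 0 ≤ ε) {t s : ℝ} (h : t ≤ s) :
    μ t ^ ((Real.sign t + 1) * ε) ≤ μ s ^ ((Real.sign s + 1) * ε) := by
  rw [rep_add hμ hε, rep_add hμ hε]
  exact max_le_max le_rfl
    (Real.rpow_le_rpow (hμ.pos t).le (hμ.mono.monotone h) (by linarith))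

lemma aux_anti (hμ : GrowthRate μ) (hε : 0 ≤ ε) {t s : ℝ} (h : s ≤ t) :
    μ t ^ ((Real.sign t - 1) * ε) ≤ μ s ^ ((Real.sign s - 1) * ε) := by
  rw [rep_sub hμ hε, rep_sub hμ hε]
  refine max_le_max le_rfl ?_
  rw [Real.rpow_neg (hμ.pos t).le, Real.rpow_neg (hμ.pos s).le]
  exact inv_anti₀ (Real.rpow_pos_of_pos (hμ.pos s) _)
    (Real.rpow_le_rpow (hμ.pos s).le (hμ.mono.monotone h) (by linarith))

lemma stable_key (hμ : GrowthRate μ) (hε : 0 ≤ ε) {t s : ℝ} (hst : s ≤ t) :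
    μ t ^ (Real.sign t * ε) * μ s ^ (Real.sign s * ε) ≤
      (μ t / μ s) ^ ε * μ s ^ (Real.sign s * (2 * ε)) := by
  have hu := hμ.pos t
  have hv := hμ.pos s
  have hLHS : μ t ^ (Real.sign t * ε) * μ s ^ (Real.sign s * ε) =
      (μ t ^ ε * μ s ^ (Real.sign s * ε)) * μ t ^ ((Real.sign t - 1) * ε) := by
    rw [show Real.sign t * ε = ε + (Real.sign t - 1) * ε by ring, Real.rpow_add hu]
    ring
  have hRHS : (μ t / μ s) ^ ε * μ s ^ (Real.sign s * (2 * ε)) =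
      (μ t ^ ε * μ s ^ (Real.sign s * ε)) * μ s ^ ((Real.sign s - 1) * ε) := by
    rw [Real.div_rpow hu.le hv.le,
      show Real.sign s * (2 * ε) = ε + (Real.sign s * ε + (Real.sign s - 1) * ε) by ring,
      Real.rpow_add hv, Real.rpow_add hv]
    have hne : μ s ^ ε ≠ 0 := (Real.rpow_pos_of_pos hv ε).ne'
    field_simp
  rw [hLHS, hRHS]
  refine mul_le_mul_of_nonneg_left (aux_anti hμ hε hst) ?_
  positivity

lemma unstable_key (hμ : GrowthRate μ) (hε : 0 ≤ ε) {t s : ℝ} (hst : t ≤ s) :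
    μ t ^ (Real.sign t * ε) * μ s ^ (Real.sign s * ε) ≤
      (μ t / μ s) ^ (-ε) * μ s ^ (Real.sign s * (2 * ε)) := by
  have hu := hμ.pos t
  have hv := hμ.pos s
  have hLHS : μ t ^ (Real.sign t * ε) * μ s ^ (Real.sign s * ε) =
      (μ t ^ (-ε) * μ s ^ (Real.sign s * ε)) * μ t ^ ((Real.sign t + 1) * ε) := by
    rw [show Real.sign t * ε = -ε + (Real.sign t + 1) * ε by ring, Real.rpow_add hu]
    ring
  have hRHS : (μ t / μ s) ^ (-ε) * μ s ^ (Real.sign s * (2 * ε)) =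
      (μ t ^ (-ε) * μ s ^ (Real.sign s * ε)) * μ s ^ ((Real.sign s + 1) * ε) := by
    rw [Real.div_rpow hu.le hv.le,
      show Real.sign s * (2 * ε) = -ε + (Real.sign s * ε + (Real.sign s + 1) * ε) by ring,
      Real.rpow_add hv, Real.rpow_add hv]
    have hne : μ s ^ (-ε) ≠ 0 := (Real.rpow_pos_of_pos hv _).ne'
    field_simp
  rw [hLHS, hRHS]
  refine mul_le_mul_of_nonneg_left (aux_mono hμ hε hst) ?_
  positivity

lemma kinsim_symm {M : Type*} [NormedRing M] {Φ Ψ : ℝ → ℝ → M} {S Sinv : ℝ → M}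
    {Mc : ℝ} (h : KinSim μ Φ Ψ S Sinv ε Mc) : KinSim μ Ψ Φ Sinv S ε Mc := by
  obtain ⟨hMc, hS1, hS2, hSn, hSin, hconj⟩ := h
  refine ⟨hMc, hS2, hS1, hSin, hSn, fun t s => ?_⟩
  have hΨ : Ψ t s = Sinv t * (Φ t s * S s) := by
    rw [hconj, ← mul_assoc, hS2, one_mul]
  rw [hΨ]
  calc Sinv t * (Φ t s * S s) * Sinv s
      = Sinv t * (Φ t s * (S s * Sinv s)) := by rw [mul_assoc, mul_assoc]
    _ = Sinv t * Φ t s := by rw [hS1, mul_one]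

lemma key_incl {M : Type*} [NormedRing M] [NormedAlgebra ℝ M] [NormOneClass M]
    (μ : ℝ → ℝ) (hμ : GrowthRate μ) (Φ Ψ : ℝ → ℝ → M) (S Sinv : ℝ → M)
    (ε Mc : ℝ) (hε : 0 ≤ ε) (hsim : KinSim μ Φ Ψ S Sinv ε Mc) :
    epsResolvent μ Φ (3 * ε) ⊆ NmuResolvent μ Ψ := by
  obtain ⟨hMc0, hS1, hS2, hSn, hSin, hconj⟩ := hsim
  have hΨ : ∀ t s, Ψ t s = Sinv t * (Φ t s * S s) := by
    intro t s; rw [hconj, ← mul_assoc, hS2, one_mul]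
  -- Mc ≥ 1
  have hMc1 : 1 ≤ Mc := by
    have h0 : ‖S 0‖ ≤ Mc := by
      have := hSn 0; rwa [Real.sign_zero, zero_mul, Real.rpow_zero, mul_one] at this
    have h0' : ‖Sinv 0‖ ≤ Mc := by
      have := hSin 0; rwa [Real.sign_zero, zero_mul, Real.rpow_zero, mul_one] at this
    have h1 : (1:ℝ) ≤ ‖S 0‖ * ‖Sinv 0‖ := by
      calc (1:ℝ) = ‖(1:M)‖ := norm_one.symm
        _ = ‖S 0 * Sinv 0‖ := by rw [hS1]
        _ ≤ ‖S 0‖ * ‖Sinv 0‖ := norm_mul_le _ _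
    nlinarith [norm_nonneg (S 0), norm_nonneg (Sinv 0)]
  intro γ hγ
  obtain ⟨hres, hgor⟩ := hγ
  obtain ⟨P₀, K₀, α₀, β₀, θ₀, ν₀, hinv₀, hd₀⟩ := hres
  have hne : {x | ∃ P K α β θ ν, IsInvProj Φ P ∧ IsNmuD μ (shiftOp μ Φ γ) P K α β θ ν ∧
      x = min (-(α + θ)) (β - ν)}.Nonempty :=
    ⟨_, P₀, K₀, α₀, β₀, θ₀, ν₀, hinv₀, hd₀, rfl⟩
  obtain ⟨x, hxT, hx⟩ := exists_lt_of_lt_csSup hne hgor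
  obtain ⟨P, K, α, β, θ, ν, hinv, hd, rfl⟩ := hxT
  obtain ⟨hK, hα, hβ, hθ, hν, hαθ, hβν, hstab, hunst⟩ := hd
  have hαθ3 : α + θ < -(3 * ε) := by
    have := lt_of_lt_of_le hx (min_le_left _ _); linarith
  have hβν3 : 3 * ε < β - ν := lt_of_lt_of_le hx (min_le_right _ _)
  set Q : ℝ → M := fun s => Sinv s * (P s * S s) with hQdef
  have hSQ : ∀ s, S s * Q s = P s * S s := by
    intro s
    rw [hQdef]
    calc S s * (Sinv s * (P s * S s)) = (S s * Sinv s) * (P s * S s) := by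
          rw [mul_assoc]
      _ = P s * S s := by rw [hS1, one_mul]
  have hΨQ : ∀ t s, Ψ t s * Q s = Sinv t * (Φ t s * (P s * S s)) := by
    intro t s
    rw [hΨ, hQdef]
    calc Sinv t * (Φ t s * S s) * (Sinv s * (P s * S s))
        = Sinv t * (Φ t s * (S s * (Sinv s * (P s * S s)))) := by
          rw [mul_assoc, mul_assoc]
      _ = Sinv t * (Φ t s * ((S s * Sinv s) * (P s * S s))) := by
          rw [mul_assoc (S s)]
      _ = Sinv t * (Φ t s * (P s * S s)) := by rw [hS1, one_mul]
  have h1Q : ∀ s, (1 : M) - Q s = Sinv s * ((1 - P s) * S s) := by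
    intro s
    rw [hQdef]
    calc (1 : M) - Sinv s * (P s * S s)
        = Sinv s * S s - Sinv s * (P s * S s) := by rw [hS2]
      _ = Sinv s * (S s - P s * S s) := by rw [mul_sub]
      _ = Sinv s * ((1 - P s) * S s) := by rw [sub_mul, one_mul]
  have hΨ1Q : ∀ t s, Ψ t s * (1 - Q s) = Sinv t * (Φ t s * ((1 - P s) * S s)) := by
    intro t s
    rw [hΨ, h1Q]
    calc Sinv t * (Φ t s * S s) * (Sinv s * ((1 - P s) * S s))
        = Sinv t * (Φ t s * (S s * (Sinv s * ((1 - P s) * S s)))) := by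
          rw [mul_assoc, mul_assoc]
      _ = Sinv t * (Φ t s * ((S s * Sinv s) * ((1 - P s) * S s))) := by
          rw [mul_assoc (S s)]
      _ = Sinv t * (Φ t s * ((1 - P s) * S s)) := by rw [hS1, one_mul]
  have hshQ : ∀ t s, shiftOp μ Ψ γ t s * Q s =
      Sinv t * (shiftOp μ Φ γ t s * P s * S s) := by
    intro t s
    simp only [shiftOp, smul_mul_assoc, mul_smul_comm, hΨQ, mul_assoc]
  have hsh1Q : ∀ t s, shiftOp μ Ψ γ t s * (1 - Q s) =
      Sinv t * (shiftOp μ Φ γ t s * (1 - P s) * S s) := by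
    intro t s
    simp only [shiftOp, smul_mul_assoc, mul_smul_comm, hΨ1Q, mul_assoc]
  have hK0 : (0:ℝ) ≤ K := by linarith
  have hMc0' : (0:ℝ) ≤ Mc := hMc0.le
  refine ⟨Q, Mc * Mc * K, α + ε, β - ε, θ + 2 * ε, ν + 2 * ε, ?_, ?_⟩
  · -- invariant projector
    constructor
    · intro s
      rw [hQdef]
      calc Sinv s * (P s * S s) * (Sinv s * (P s * S s))
          = Sinv s * (P s * (S s * (Sinv s * (P s * S s)))) := by
            rw [mul_assoc, mul_assoc]
        _ = Sinv s * (P s * ((S s * Sinv s) * (P s * S s))) := by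
            rw [mul_assoc (S s)]
        _ = Sinv s * (P s * (P s * S s)) := by rw [hS1, one_mul]
        _ = Sinv s * ((P s * P s) * S s) := by rw [mul_assoc]
        _ = Sinv s * (P s * S s) := by rw [hinv.1]
    · intro t s
      rw [hΨQ, hQdef]
      calc Sinv t * (P t * S t) * Ψ t s
          = Sinv t * (P t * (S t * Ψ t s)) := by rw [mul_assoc, mul_assoc]
        _ = Sinv t * (P t * (Φ t s * S s)) := by rw [← hconj]
        _ = Sinv t * ((P t * Φ t s) * S s) := by rw [mul_assoc]
        _ = Sinv t * ((Φ t s * P s) * S s) := by rw [hinv.2]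
        _ = Sinv t * (Φ t s * (P s * S s)) := by rw [mul_assoc]
  · refine ⟨?_, by linarith, by linarith, by linarith, by linarith, by linarith,
      by linarith, ?_, ?_⟩
    · nlinarith
    · -- stable estimate
      intro t s hst
      have hμt := hμ.pos t
      have hμs := hμ.pos s
      have hdiv : 0 < μ t / μ s := div_pos hμt hμs
      have hkey := stable_key hμ hε hst
      calc ‖shiftOp μ Ψ γ t s * Q s‖
          = ‖Sinv t * (shiftOp μ Φ γ t s * P s * S s)‖ := by rw [hshQ]
        _ ≤ ‖Sinv t‖ * (‖shiftOp μ Φ γ t s * P s‖ * ‖S s‖) := by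
            refine (norm_mul_le _ _).trans ?_
            exact mul_le_mul_of_nonneg_left (norm_mul_le _ _) (norm_nonneg _)
        _ ≤ (Mc * μ t ^ (Real.sign t * ε)) *
              ((K * (μ t / μ s) ^ α * μ s ^ (Real.sign s * θ)) *
               (Mc * μ s ^ (Real.sign s * ε))) := by
            refine mul_le_mul (hSin t) ?_ (mul_nonneg (norm_nonneg _) (norm_nonneg _))
              (mul_nonneg hMc0' (Real.rpow_nonneg hμt.le _))
            refine mul_le_mul (hstab t s hst) (hSn s) (norm_nonneg _) ?_
            exact mul_nonneg (mul_nonneg hK0 (Real.rpow_nonneg hdiv.le _))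
              (Real.rpow_nonneg hμs.le _)
        _ = (Mc * Mc * K) * ((μ t / μ s) ^ α * μ s ^ (Real.sign s * θ)) *
              (μ t ^ (Real.sign t * ε) * μ s ^ (Real.sign s * ε)) := by ring
        _ ≤ (Mc * Mc * K) * ((μ t / μ s) ^ α * μ s ^ (Real.sign s * θ)) *
              ((μ t / μ s) ^ ε * μ s ^ (Real.sign s * (2 * ε))) := by
            refine mul_le_mul_of_nonneg_left hkey ?_
            exact mul_nonneg (mul_nonneg (mul_nonneg hMc0' hMc0') hK0)
              (mul_nonneg (Real.rpow_nonneg hdiv.le _) (Real.rpow_nonneg hμs.le _))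
        _ = Mc * Mc * K * (μ t / μ s) ^ (α + ε) *
              μ s ^ (Real.sign s * (θ + 2 * ε)) := by
            rw [Real.rpow_add hdiv,
              show Real.sign s * (θ + 2 * ε)
                = Real.sign s * θ + Real.sign s * (2 * ε) by ring,
              Real.rpow_add hμs]
            ring
    · -- unstable estimate
      intro t s hst
      have hμt := hμ.pos t
      have hμs := hμ.pos s
      have hdiv : 0 < μ t / μ s := div_pos hμt hμs
      have hkey := unstable_key hμ hε hst
      calc ‖shiftOp μ Ψ γ t s * (1 - Q s)‖
          = ‖Sinv t * (shiftOp μ Φ γ t s * (1 - P s) * S s)‖ := by rw [hsh1Q]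
        _ ≤ ‖Sinv t‖ * (‖shiftOp μ Φ γ t s * (1 - P s)‖ * ‖S s‖) := by
            refine (norm_mul_le _ _).trans ?_
            exact mul_le_mul_of_nonneg_left (norm_mul_le _ _) (norm_nonneg _)
        _ ≤ (Mc * μ t ^ (Real.sign t * ε)) *
              ((K * (μ t / μ s) ^ β * μ s ^ (Real.sign s * ν)) *
               (Mc * μ s ^ (Real.sign s * ε))) := by
            refine mul_le_mul (hSin t) ?_ (mul_nonneg (norm_nonneg _) (norm_nonneg _))
              (mul_nonneg hMc0' (Real.rpow_nonneg hμt.le _))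
            refine mul_le_mul (hunst t s hst) (hSn s) (norm_nonneg _) ?_
            exact mul_nonneg (mul_nonneg hK0 (Real.rpow_nonneg hdiv.le _))
              (Real.rpow_nonneg hμs.le _)
        _ = (Mc * Mc * K) * ((μ t / μ s) ^ β * μ s ^ (Real.sign s * ν)) *
              (μ t ^ (Real.sign t * ε) * μ s ^ (Real.sign s * ε)) := by ring
        _ ≤ (Mc * Mc * K) * ((μ t / μ s) ^ β * μ s ^ (Real.sign s * ν)) *
              ((μ t / μ s) ^ (-ε) * μ s ^ (Real.sign s * (2 * ε))) := by
            refine mul_le_mul_of_nonneg_left hkey ?_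
            exact mul_nonneg (mul_nonneg (mul_nonneg hMc0' hMc0') hK0)
              (mul_nonneg (Real.rpow_nonneg hdiv.le _) (Real.rpow_nonneg hμs.le _))
        _ = Mc * Mc * K * (μ t / μ s) ^ (β - ε) *
              μ s ^ (Real.sign s * (ν + 2 * ε)) := by
            rw [show β - ε = β + -ε by ring, Real.rpow_add hdiv,
              show Real.sign s * (ν + 2 * ε)
                = Real.sign s * ν + Real.sign s * (2 * ε) by ring,
              Real.rpow_add hμs]
            ring

end Aux

/-- mutual inclusion of the 3ε-interiors of the resolvents of
nonuniformly (μ, ε)-kinematically similar systems, equivalently the spectra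
are contained in the 3ε-neighborhoods of each other's spectra. -/
theorem stmt12 {M : Type*} [NormedRing M] [NormedAlgebra ℝ M] [NormOneClass M]
    (μ : ℝ → ℝ) (hμ : GrowthRate μ) (Φ Ψ : ℝ → ℝ → M) (S Sinv : ℝ → M)
    (Khat c ep : ℝ) (hep : 0 ≤ ep) (hg : HasNmuGrowth μ Φ Khat c ep)
    (ε Mc : ℝ) (hε : 0 ≤ ε) (hsim : KinSim μ Φ Ψ S Sinv ε Mc) :
    epsResolvent μ Φ (3 * ε) ⊆ NmuResolvent μ Ψ ∧
    epsResolvent μ Ψ (3 * ε) ⊆ NmuResolvent μ Φ ∧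
    (NmuResolvent μ Φ)ᶜ ⊆ (epsResolvent μ Ψ (3 * ε))ᶜ ∧
    (NmuResolvent μ Ψ)ᶜ ⊆ (epsResolvent μ Φ (3 * ε))ᶜ := by
  have h1 : epsResolvent μ Φ (3 * ε) ⊆ NmuResolvent μ Ψ :=
    key_incl μ hμ Φ Ψ S Sinv ε Mc hε hsim
  have h2 : epsResolvent μ Ψ (3 * ε) ⊆ NmuResolvent μ Φ :=
    key_incl μ hμ Ψ Φ Sinv S ε Mc hε (kinsim_symm hsim)
  exact ⟨h1, h2, compl_subset_compl.mpr h2, compl_subset_compl.mpr h1⟩
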